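/- Let G be a ⌈cn⌉-regular graph on n vertices, and let 0 < γ, ε < 1. If n is sufficiently large, there exists a set R ⊆ V(G) with (1-ε)γn ≤ |R| ≤ (1+ε)γn such that every vertex v of G satisfies (1-ε)cγn ≤ |N(v) ∩ R| ≤ (1+ε)cγn. -/

import Mathlib

open Finset

set_option linter.unusedSectionVars false
set_option linter.unusedVariables false

open Finset

namespace Reservoir

variable {V : Type} [Fintype V] [DecidableEq V]

def ber (γ : ℝ) (b : Bool) : ℝ := if b then γ else 1 - γ

def wgt (γ : ℝ) (ω : V → Bool) : ℝ := ∏ v, ber γ (ω v)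

def Ex (γ : ℝ) (f : (V → Bool) → ℝ) : ℝ := ∑ ω, wgt γ ω * f ω

lemma ber_nonneg {γ : ℝ} (h0 : 0 ≤ γ) (h1 : γ ≤ 1) (b : Bool) : 0 ≤ ber γ b := by
  cases b <;> simp [ber] <;> linarith

lemma sum_ber (γ : ℝ) : ∑ b, ber γ b = 1 := by simp [ber]

lemma wgt_nonneg {γ : ℝ} (h0 : 0 ≤ γ) (h1 : γ ≤ 1) (ω : V → Bool) : 0 ≤ wgt γ ω :=
  Finset.prod_nonneg fun v _ => ber_nonneg h0 h1 _

lemma sum_wgt (γ : ℝ) : ∑ ω : V → Bool, wgt γ ω = 1 := by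
  have h := (Fintype.prod_sum (fun (_ : V) (b : Bool) => ber γ b)).symm
  simp only [sum_ber, Finset.prod_const_one] at h
  unfold wgt
  linarith [h]

end Reservoir

namespace Reservoir2
open Reservoir
variable {V : Type} [Fintype V] [DecidableEq V]

lemma Ex_split (γ : ℝ) (u : V) (f : (V → Bool) → ℝ)
    (hf : ∀ ω b, f (Function.update ω u b) = f ω) (g : Bool → ℝ) :
    Ex γ (fun ω => f ω * g (ω u)) = Ex γ f * ∑ b, ber γ b * g b := by
  classical
  set e := Equiv.funSplitAt u Bool with he
  set W : ({j // j ≠ u} → Bool) → ℝ := fun ρ => ∏ j, ber γ (ρ j) with hW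
  have happ : ∀ (b : Bool) ρ, (e.symm (b, ρ)) u = b := by
    intro b ρ; simp [he, Equiv.funSplitAt, Equiv.piSplitAt]
  have happ' : ∀ (b : Bool) ρ (v : V) (h : v ≠ u), (e.symm (b, ρ)) v = ρ ⟨v, h⟩ := by
    intro b ρ v h; simp [he, Equiv.funSplitAt, Equiv.piSplitAt, h]
  have hwgt : ∀ (b : Bool) ρ, wgt γ (e.symm (b, ρ)) = ber γ b * W ρ := by
    intro b ρ
    rw [wgt, ← Finset.mul_prod_erase Finset.univ _ (Finset.mem_univ u), happ b ρ]
    congr 1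
    rw [Finset.prod_subtype (Finset.univ.erase u) (p := fun v => v ≠ u)
      (fun x => by simp) (fun v => ber γ ((e.symm (b, ρ)) v))]
    exact Finset.prod_congr rfl fun j _ => by rw [happ' b ρ j j.2]
  have hupd : ∀ (b : Bool) ρ, e.symm (b, ρ) = Function.update (e.symm (true, ρ)) u b := by
    intro b ρ; funext v
    by_cases h : v = u
    · subst h; rw [Function.update_self, happ]
    · rw [Function.update_of_ne h, happ' b ρ v h, happ' true ρ v h]
  have hfconst : ∀ (b : Bool) ρ, f (e.symm (b, ρ)) = f (e.symm (true, ρ)) := by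
    intro b ρ; rw [hupd b ρ, hf]
  have key : ∀ (h : (V → Bool) → ℝ),
      ∑ ω, h ω = ∑ b, ∑ ρ, h (e.symm (b, ρ)) := by
    intro h
    rw [← Equiv.sum_comp e.symm h, Fintype.sum_prod_type]
  rw [Ex, Ex, key, key (fun ω => wgt γ ω * f ω)]
  simp only [hwgt, hfconst, happ]
  have h1 : ∀ b : Bool, ∑ ρ, ber γ b * W ρ * (f (e.symm (true, ρ)) * g b)
      = (ber γ b * g b) * ∑ ρ, W ρ * f (e.symm (true, ρ)) := by
    intro b; rw [Finset.mul_sum]; exact Finset.sum_congr rfl fun ρ _ => by ring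
  have h2 : ∀ b : Bool, ∑ ρ, ber γ b * W ρ * f (e.symm (true, ρ))
      = ber γ b * ∑ ρ, W ρ * f (e.symm (true, ρ)) := by
    intro b; rw [Finset.mul_sum]; exact Finset.sum_congr rfl fun ρ _ => by ring
  simp only [h1, h2]
  rw [← Finset.sum_mul, ← Finset.sum_mul, sum_ber]
  ring

end Reservoir2

namespace Reservoir
variable {V : Type} [Fintype V] [DecidableEq V]

def Yb (γ : ℝ) (b : Bool) : ℝ := (if b then 1 else 0) - γ

def SA (γ : ℝ) (A : Finset V) (ω : V → Bool) : ℝ := ∑ v ∈ A, Yb γ (ω v)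

def mj (γ : ℝ) (j : ℕ) : ℝ := ∑ b, ber γ b * (Yb γ b) ^ j

lemma mj_eq (γ : ℝ) (j : ℕ) : mj γ j = γ * (1 - γ) ^ j + (1 - γ) * (-γ) ^ j := by
  simp only [mj, ber, Yb]
  rw [Fintype.sum_bool]
  norm_num

lemma mj_one (γ : ℝ) : mj γ 1 = 0 := by rw [mj_eq]; ring

lemma mj_two (γ : ℝ) : mj γ 2 = γ * (1 - γ) := by rw [mj_eq]; ring

lemma mj_two_nonneg {γ : ℝ} (h0 : 0 ≤ γ) (h1 : γ ≤ 1) : 0 ≤ mj γ 2 := by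
  rw [mj_two]; nlinarith

lemma mj_two_le {γ : ℝ} (h0 : 0 ≤ γ) (h1 : γ ≤ 1) : mj γ 2 ≤ 1/4 := by
  rw [mj_two]; nlinarith [sq_nonneg (1-2*γ)]

lemma mj_four_le {γ : ℝ} (h0 : 0 ≤ γ) (h1 : γ ≤ 1) : mj γ 4 ≤ 1/4 := by
  rw [mj_eq]; nlinarith [sq_nonneg γ, sq_nonneg (1-γ), sq_nonneg (γ*(1-γ)), sq_nonneg (1-2*γ)]

lemma Ex_congr (γ : ℝ) {f g : (V → Bool) → ℝ} (h : ∀ ω, f ω = g ω) : Ex γ f = Ex γ g := by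
  unfold Ex; exact Finset.sum_congr rfl fun ω _ => by rw [h]

lemma Ex_add (γ : ℝ) (f g : (V → Bool) → ℝ) :
    Ex γ (fun ω => f ω + g ω) = Ex γ f + Ex γ g := by
  unfold Ex; rw [← Finset.sum_add_distrib]
  exact Finset.sum_congr rfl fun ω _ => by ring

lemma Ex_const_mul (γ : ℝ) (c : ℝ) (f : (V → Bool) → ℝ) :
    Ex γ (fun ω => c * f ω) = c * Ex γ f := by
  unfold Ex; rw [Finset.mul_sum]
  exact Finset.sum_congr rfl fun ω _ => by ring

lemma Ex_one (γ : ℝ) : Ex γ (fun _ : V → Bool => (1:ℝ)) = 1 := by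
  unfold Ex; simpa using sum_wgt (V := V) γ

lemma SA_update (γ : ℝ) {A : Finset V} {u : V} (hu : u ∉ A) (ω : V → Bool) (b : Bool) :
    SA γ A (Function.update ω u b) = SA γ A ω := by
  unfold SA
  refine Finset.sum_congr rfl fun v hv => ?_
  have hne : v ≠ u := by rintro rfl; exact hu hv
  rw [Function.update_of_ne hne]

lemma Ex_pow_mul (γ : ℝ) {A : Finset V} {u : V} (hu : u ∉ A) (k j : ℕ) :
    Ex γ (fun ω => (SA γ A ω) ^ k * (Yb γ (ω u)) ^ j)
      = Ex γ (fun ω => (SA γ A ω) ^ k) * mj γ j := by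
  rw [mj]
  exact Reservoir2.Ex_split γ u _ (fun ω b => by rw [SA_update γ hu]) (fun b => (Yb γ b) ^ j)

lemma moments (γ : ℝ) (h0 : 0 ≤ γ) (h1 : γ ≤ 1) (A : Finset V) :
    Ex γ (fun ω => SA γ A ω) = 0 ∧
    Ex γ (fun ω => (SA γ A ω) ^ 2) = A.card * (γ * (1 - γ)) ∧
    Ex γ (fun ω => (SA γ A ω) ^ 4) ≤ (A.card : ℝ) ^ 2 := by
  classical
  induction A using Finset.induction_on with
  | empty => simp [SA, Ex]
  | insert _ _ hu =>
    rename_i u A IH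
    obtain ⟨I1, I2, I4⟩ := IH
    have hins : ∀ ω, SA γ (insert u A) ω = SA γ A ω + Yb γ (ω u) := fun ω => by
      rw [SA, Finset.sum_insert hu, add_comm]; rfl
    have e1 : Ex γ (fun ω => SA γ (insert u A) ω) = 0 := by
      rw [Ex_congr γ hins, Ex_add]
      have : Ex γ (fun ω => Yb γ (ω u)) = mj γ 1 := by
        have := Ex_pow_mul γ (A := A) hu 0 1
        simpa [Ex_one] using this
      rw [I1, this, mj_one]; ring
    have e2 : Ex γ (fun ω => (SA γ (insert u A) ω) ^ 2)
        = (insert u A).card * (γ * (1 - γ)) := by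
      have expand : ∀ ω, (SA γ (insert u A) ω) ^ 2 =
          (SA γ A ω) ^ 2 + (2 * ((SA γ A ω) ^ 1 * (Yb γ (ω u)) ^ 1)
            + (SA γ A ω) ^ 0 * (Yb γ (ω u)) ^ 2) := fun ω => by
        rw [hins]; ring
      rw [Ex_congr γ expand, Ex_add, Ex_add, Ex_const_mul, Ex_pow_mul γ hu,
        Ex_pow_mul γ hu, mj_one]
      have hE1 : Ex γ (fun ω => (SA γ A ω) ^ 0) = 1 := by
        simpa using Ex_one (V := V) γ
      have hE1' : Ex γ (fun ω => (SA γ A ω) ^ 1) = 0 := by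
        simpa using I1
      rw [hE1, hE1', I2, mj_two, Finset.card_insert_of_notMem hu]
      push_cast; ring
    refine ⟨e1, e2, ?_⟩
    have expand : ∀ ω, (SA γ (insert u A) ω) ^ 4 =
        (SA γ A ω) ^ 4 + (4 * ((SA γ A ω) ^ 3 * (Yb γ (ω u)) ^ 1)
          + (6 * ((SA γ A ω) ^ 2 * (Yb γ (ω u)) ^ 2)
          + (4 * ((SA γ A ω) ^ 1 * (Yb γ (ω u)) ^ 3)
          + (SA γ A ω) ^ 0 * (Yb γ (ω u)) ^ 4))) := fun ω => by
      rw [hins]; ring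
    rw [Ex_congr γ expand, Ex_add, Ex_add, Ex_add, Ex_add, Ex_const_mul, Ex_const_mul,
      Ex_const_mul, Ex_pow_mul γ hu, Ex_pow_mul γ hu, Ex_pow_mul γ hu, Ex_pow_mul γ hu,
      mj_one, mj_two]
    have hE1 : Ex γ (fun ω => (SA γ A ω) ^ 0) = 1 := by
      simpa using Ex_one (V := V) γ
    have hE1' : Ex γ (fun ω => (SA γ A ω) ^ 1) = 0 := by
      simpa using I1
    rw [hE1, hE1', I2, Finset.card_insert_of_notMem hu]
    have hm4 := mj_four_le h0 h1
    have hc : (0:ℝ) ≤ (A.card : ℝ) := Nat.cast_nonneg _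
    have hm0 : (0:ℝ) ≤ γ * (1-γ) := by nlinarith
    have hsq : (γ * (1-γ)) * (γ * (1-γ)) ≤ 1/16 := by nlinarith [sq_nonneg (1-2*γ)]
    push_cast
    nlinarith [mul_le_mul_of_nonneg_left hsq hc, I4]

lemma markov (γ : ℝ) (h0 : 0 ≤ γ) (h1 : γ ≤ 1) (A : Finset V) {t : ℝ} (ht : 0 < t) :
    ∑ ω ∈ Finset.univ.filter (fun ω => t < |SA γ A ω|), wgt γ ω
      ≤ (A.card : ℝ) ^ 2 / t ^ 4 := by
  classical
  set B := Finset.univ.filter (fun ω : V → Bool => t < |SA γ A ω|) with hB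
  have hkey : t ^ 4 * ∑ ω ∈ B, wgt γ ω ≤ (A.card : ℝ) ^ 2 := by
    calc t ^ 4 * ∑ ω ∈ B, wgt γ ω = ∑ ω ∈ B, wgt γ ω * t ^ 4 := by
          rw [Finset.mul_sum]; exact Finset.sum_congr rfl fun ω _ => by ring
      _ ≤ ∑ ω ∈ B, wgt γ ω * (SA γ A ω) ^ 4 := by
          refine Finset.sum_le_sum fun ω hω => ?_
          have hω' : t < |SA γ A ω| := by
            simpa [hB] using hω
          have h4 : t ^ 4 ≤ (SA γ A ω) ^ 4 := by
            calc t ^ 4 ≤ |SA γ A ω| ^ 4 := pow_le_pow_left₀ ht.le hω'.le 4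
              _ = (SA γ A ω) ^ 4 := by
                  rw [← abs_pow]; exact abs_of_nonneg (by positivity)
          exact mul_le_mul_of_nonneg_left h4 (wgt_nonneg h0 h1 ω)
      _ ≤ ∑ ω, wgt γ ω * (SA γ A ω) ^ 4 := by
          refine Finset.sum_le_sum_of_subset_of_nonneg (Finset.filter_subset _ _)
            fun ω _ _ => ?_
          exact mul_nonneg (wgt_nonneg h0 h1 ω) (by positivity)
      _ ≤ (A.card : ℝ) ^ 2 := (moments γ h0 h1 A).2.2
  rw [le_div_iff₀ (by positivity)]
  linarith [hkey]

lemma exists_good (γ : ℝ) (h0 : 0 ≤ γ) (h1 : γ ≤ 1) (A : Option V → Finset V)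
    (t : Option V → ℝ) (ht : ∀ o, 0 < t o)
    (hsum : ∑ o : Option V, ((A o).card : ℝ) ^ 2 / (t o) ^ 4 < 1) :
    ∃ ω : V → Bool, ∀ o, |SA γ (A o) ω| ≤ t o := by
  classical
  by_contra hcon
  push_neg at hcon
  have key : ∀ ω : V → Bool, wgt γ ω
      ≤ ∑ o : Option V, if t o < |SA γ (A o) ω| then wgt γ ω else 0 := by
    intro ω
    obtain ⟨o, ho⟩ := hcon ω
    have h1' : wgt γ ω = if t o < |SA γ (A o) ω| then wgt γ ω else 0 := by
      rw [if_pos ho]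
    refine h1'.trans_le ?_
    exact Finset.single_le_sum (f := fun o => if t o < |SA γ (A o) ω| then wgt γ ω else 0)
      (fun o _ => by split_ifs; exacts [wgt_nonneg h0 h1 ω, le_rfl]) (Finset.mem_univ o)
  have hchain : (1:ℝ) ≤ ∑ o : Option V, ∑ ω ∈ Finset.univ.filter
      (fun ω : V → Bool => t o < |SA γ (A o) ω|), wgt γ ω := by
    calc (1:ℝ) = ∑ ω : V → Bool, wgt γ ω := (sum_wgt γ).symm
      _ ≤ ∑ ω : V → Bool, ∑ o : Option V,
            (if t o < |SA γ (A o) ω| then wgt γ ω else 0) := Finset.sum_le_sum fun ω _ => key ω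
      _ = ∑ o : Option V, ∑ ω : V → Bool,
            (if t o < |SA γ (A o) ω| then wgt γ ω else 0) := Finset.sum_comm
      _ = ∑ o : Option V, ∑ ω ∈ Finset.univ.filter
            (fun ω : V → Bool => t o < |SA γ (A o) ω|), wgt γ ω := by
          exact Finset.sum_congr rfl fun o _ => (Finset.sum_filter _ _).symm
  have hlt : ∑ o : Option V, ∑ ω ∈ Finset.univ.filter
      (fun ω : V → Bool => t o < |SA γ (A o) ω|), wgt γ ω < 1 := by
    calc _ ≤ ∑ o : Option V, ((A o).card : ℝ) ^ 2 / (t o) ^ 4 :=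
          Finset.sum_le_sum fun o _ => markov γ h0 h1 (A o) (ht o)
      _ < 1 := hsum
  linarith

lemma SA_card (γ : ℝ) (B : Finset V) (ω : V → Bool) :
    SA γ B ω = ((B.filter (fun v => ω v = true)).card : ℝ) - γ * B.card := by
  unfold SA Yb
  rw [Finset.sum_sub_distrib, Finset.sum_const, Finset.sum_boole]
  simp [nsmul_eq_mul]; ring

end Reservoir

open Reservoir in
/-- Reservoir lemma: in a `⌈cn⌉`-regular graph on `n` vertices with `n` large, there
is a set `R` of size `(1±ε)γn` such that every vertex has `(1±ε)cγn` neighbors in `R`. -/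
theorem stmt_10 (c γ ε : ℝ) (hc0 : 0 < c) (hc1 : c ≤ 1) (hγ0 : 0 < γ) (hγ1 : γ < 1)
    (hε0 : 0 < ε) (hε1 : ε < 1) :
    ∃ n₀ : ℕ, ∀ n : ℕ, n₀ ≤ n →
      ∀ (V : Type) [Fintype V] [DecidableEq V] (G : SimpleGraph V) [DecidableRel G.Adj],
        Fintype.card V = n → G.IsRegularOfDegree ⌈c * n⌉₊ →
        ∃ R : Finset V,
          ((1 - ε) * γ * n ≤ (R.card : ℝ) ∧ (R.card : ℝ) ≤ (1 + ε) * γ * n) ∧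
          ∀ v : V, (1 - ε) * c * γ * n ≤ ((G.neighborFinset v ∩ R).card : ℝ) ∧
            ((G.neighborFinset v ∩ R).card : ℝ) ≤ (1 + ε) * c * γ * n := by
  classical
  refine ⟨⌈17/(ε^4*γ^4*c^2)⌉₊ + ⌈4/(ε*c)⌉₊ + 1, ?_⟩
  intro n hn V _ _ G _ hcard hreg
  set d : ℕ := ⌈c * n⌉₊ with hd
  have hn1R : 17/(ε^4*γ^4*c^2) < (n:ℝ) := by
    have h1 : ⌈17/(ε^4*γ^4*c^2)⌉₊ < n := by omega
    calc 17/(ε^4*γ^4*c^2) ≤ (⌈17/(ε^4*γ^4*c^2)⌉₊ : ℝ) := Nat.le_ceil _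
      _ < n := by exact_mod_cast h1
  have hn2R : 4/(ε*c) < (n:ℝ) := by
    have h1 : ⌈4/(ε*c)⌉₊ < n := by omega
    calc 4/(ε*c) ≤ (⌈4/(ε*c)⌉₊ : ℝ) := Nat.le_ceil _
      _ < n := by exact_mod_cast h1
  have hnpos : 0 < (n:ℝ) := by
    have : 1 ≤ n := by omega
    exact_mod_cast Nat.lt_of_lt_of_le Nat.zero_lt_one this
  have hn1' : (1:ℝ) ≤ n := by exact_mod_cast (by omega : 1 ≤ n)
  have hd1 : c * n ≤ (d:ℝ) := Nat.le_ceil _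
  have hd2 : (d:ℝ) ≤ c * n + 1 := by
    have := Nat.ceil_lt_add_one (by positivity : (0:ℝ) ≤ c * n)
    rw [hd]; push_cast; linarith
  have hdpos : 0 < (d:ℝ) := lt_of_lt_of_le (by positivity) hd1
  -- apply the probabilistic existence lemma
  set A : Option V → Finset V := fun o => o.elim Finset.univ (fun v => G.neighborFinset v)
    with hA
  set t : Option V → ℝ := fun o => o.elim (ε*γ*n) (fun _ => (ε/2)*γ*d) with ht
  have hcardA : ∀ o, ((A o).card : ℝ) = o.elim (n:ℝ) (fun _ => (d:ℝ)) := by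
    rintro (_ | v)
    · simp [hA, hcard]
    · simp [hA, SimpleGraph.card_neighborFinset_eq_degree, hreg v]
  have htpos : ∀ o, 0 < t o := by
    rintro (_ | v) <;> simp [ht] <;> positivity
  have hsum : ∑ o : Option V, ((A o).card : ℝ) ^ 2 / (t o) ^ 4 < 1 := by
    rw [Fintype.sum_option]
    have h1 : ((A none).card : ℝ) ^ 2 / (t none) ^ 4 ≤ 1/(ε^4*γ^4*c^2*n) := by
      rw [hcardA none]
      simp only [ht, Option.elim]
      rw [div_le_div_iff₀ (by positivity) (by positivity)]
      have hc2 : c^2 ≤ 1 := by nlinarith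
      have h3 : (n:ℝ)^3 ≤ (n:ℝ)^4 := pow_le_pow_right₀ hn1' (by norm_num)
      calc (n:ℝ)^2 * (ε^4*γ^4*c^2*n) = (ε^4*γ^4) * (c^2 * (n:ℝ)^3) := by ring
        _ ≤ (ε^4*γ^4) * (1 * (n:ℝ)^4) := by
            refine mul_le_mul_of_nonneg_left ?_ (by positivity)
            exact mul_le_mul hc2 h3 (by positivity) (by norm_num)
        _ = 1 * (ε*γ*↑n)^4 := by ring
    have h2 : ∀ v : V, ((A (some v)).card : ℝ) ^ 2 / (t (some v)) ^ 4
        ≤ 16/(ε^4*γ^4*c^2*n^2) := by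
      intro v
      rw [hcardA (some v)]
      simp only [ht, Option.elim]
      rw [div_le_div_iff₀ (by positivity) (by positivity)]
      have hsq : (c*n)^2 ≤ (d:ℝ)^2 := pow_le_pow_left₀ (by positivity) hd1 2
      calc (d:ℝ)^2 * (ε^4*γ^4*c^2*n^2) = (ε^4*γ^4) * ((d:ℝ)^2 * (c*n)^2) := by ring
        _ ≤ (ε^4*γ^4) * ((d:ℝ)^2 * (d:ℝ)^2) := by
            refine mul_le_mul_of_nonneg_left ?_ (by positivity)
            exact mul_le_mul_of_nonneg_left hsq (by positivity)
        _ = 16 * (ε/2*γ*↑d)^4 := by ring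
    have hsum2 : ∑ v : V, ((A (some v)).card : ℝ) ^ 2 / (t (some v)) ^ 4
        ≤ 16/(ε^4*γ^4*c^2*n) := by
      calc ∑ v : V, ((A (some v)).card : ℝ) ^ 2 / (t (some v)) ^ 4
          ≤ ∑ _v : V, 16/(ε^4*γ^4*c^2*n^2) := Finset.sum_le_sum fun v _ => h2 v
        _ = n * (16/(ε^4*γ^4*c^2*n^2)) := by
            rw [Finset.sum_const, Finset.card_univ, hcard, nsmul_eq_mul]
        _ = 16/(ε^4*γ^4*c^2*n) := by field_simp
    have hfin : 1/(ε^4*γ^4*c^2*n) + 16/(ε^4*γ^4*c^2*n) < 1 := by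
      rw [← add_div, div_lt_one (by positivity)]
      have : 17 < ε^4*γ^4*c^2 * n := by
        rw [div_lt_iff₀ (by positivity)] at hn1R
        linarith [hn1R]
      linarith
    linarith [hsum2, h1]
  obtain ⟨ω, hω⟩ := exists_good γ hγ0.le hγ1.le A t htpos hsum
  refine ⟨Finset.univ.filter (fun v => ω v = true), ?_, ?_⟩
  · have h := hω none
    rw [SA_card] at h
    simp only [ht, Option.elim, hA] at h ⊢
    rw [Finset.card_univ, hcard] at h
    rw [abs_le] at h
    constructor <;> nlinarith [h.1, h.2]
  · intro v
    have h := hω (some v)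
    rw [SA_card] at h
    simp only [ht, Option.elim, hA] at h ⊢
    have hNcard : ((G.neighborFinset v).card : ℝ) = d := by
      rw [SimpleGraph.card_neighborFinset_eq_degree, hreg v]
    have hRint : G.neighborFinset v ∩ Finset.univ.filter (fun u => ω u = true)
        = (G.neighborFinset v).filter (fun u => ω u = true) := by
      ext u; simp [Finset.mem_inter, Finset.mem_filter]
    rw [hNcard, abs_le] at h
    rw [hRint]
    set X : ℝ := (((G.neighborFinset v).filter (fun u => ω u = true)).card : ℝ) with hX
    have hlow : γ * (c*n) ≤ γ * d := mul_le_mul_of_nonneg_left hd1 hγ0.le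
    have hup : γ * d ≤ γ * (c*n+1) := mul_le_mul_of_nonneg_left hd2 hγ0.le
    have hεcn : 4 < ε * c * n := by
      rw [div_lt_iff₀ (by positivity)] at hn2R
      linarith [hn2R]
    constructor
    · -- lower bound
      have h1 : (1 - ε/2) * (γ * (c*n)) ≤ (1 - ε/2) * (γ * d) :=
        mul_le_mul_of_nonneg_left hlow (by linarith)
      have e1 : (0:ℝ) ≤ ε * (c * (γ * n)) := by positivity
      linarith [h.1, h1, e1]
    · -- upper bound
      have h1 : (1 + ε/2) * (γ * d) ≤ (1 + ε/2) * (γ * (c*n+1)) :=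
        mul_le_mul_of_nonneg_left hup (by linarith)
      have h2 : ε * γ ≤ 1 * γ := mul_le_mul_of_nonneg_right hε1.le hγ0.le
      have h3 : 4 * γ ≤ (ε * c * n) * γ := by
        have := mul_le_mul_of_nonneg_right hεcn.le hγ0.le
        linarith
      linarith [h.2, h1]
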